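/- arXiv:2602.14732 — 2 statements merged into one kernel-verified Lean document; each statement's English description precedes it below -/
import Mathlib

section
/- Let {E_i}_{i∈[n]} be an orthogonal resolution of identity on ℂ^d (∑_i E_i = I and E_i E_j = δ_{ij} E_i), and let Λ(X) := ∑_i E_i X E_i be the associated pinching channel. Let P be positive definite and let C be positive definite with Λ(C) = C. Define M := Λ(P)^{-1} # C. Then Λ(M P M) = C, and M P M is the unique maximizer of Q ↦ F(P,Q) over the set {Q PSD : Λ(Q) = C}. -/
open Matrix Kronecker
open scoped ComplexOrder

noncomputable section

open Classical in
/-- The positive semidefinite square root of a PSD matrix (junk value `0` otherwise). -/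
noncomputable def msqrt {n : Type*} [Fintype n] [DecidableEq n] (A : Matrix n n ℂ) :
    Matrix n n ℂ :=
  if h : A.PosSemidef then
    (h.1.eigenvectorUnitary : Matrix n n ℂ) *
      diagonal (((↑) : ℝ → ℂ) ∘ Real.sqrt ∘ h.1.eigenvalues) *
      (star h.1.eigenvectorUnitary : Matrix n n ℂ)
  else 0

/-- The (square-root) fidelity `F(P,Q) = Tr[√(√Q P √Q)]`. -/
noncomputable def fidelity {n : Type*} [Fintype n] [DecidableEq n]
    (P Q : Matrix n n ℂ) : ℝ :=
  ((msqrt (msqrt Q * P * msqrt Q)).trace).re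

/-- The matrix geometric mean `A # B = A^{1/2} √(A^{-1/2} B A^{-1/2}) A^{1/2}`. -/
noncomputable def geomMean {n : Type*} [Fintype n] [DecidableEq n]
    (A B : Matrix n n ℂ) : Matrix n n ℂ :=
  msqrt A * msqrt ((msqrt A)⁻¹ * B * (msqrt A)⁻¹) * msqrt A

set_option linter.unusedSectionVars false
set_option maxHeartbeats 1000000

namespace Helper
variable {d : Type*} [Fintype d] [DecidableEq d] {n : ℕ}

open scoped MatrixOrder in
lemma msqrt_of {A : Matrix d d ℂ} (h : A.PosSemidef) : msqrt A = CFC.sqrt A := by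
  have h0 : (0 : Matrix d d ℂ) ≤ A := h.nonneg
  rw [CFC.sqrt_eq_real_sqrt A h0, cfcₙ_eq_cfc (hf0 := by simp), h.1.cfc_eq]
  unfold msqrt
  rw [dif_pos h]
  rfl

open scoped MatrixOrder in
lemma msqrt_posSemidef {A : Matrix d d ℂ} (h : A.PosSemidef) : (msqrt A).PosSemidef := by
  rw [msqrt_of h]; exact (CFC.sqrt_nonneg A).posSemidef

open scoped MatrixOrder in
lemma msqrt_mul_self {A : Matrix d d ℂ} (h : A.PosSemidef) : msqrt A * msqrt A = A := by
  rw [msqrt_of h]; exact CFC.sqrt_mul_sqrt_self A h.nonneg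

lemma msqrt_herm {A : Matrix d d ℂ} (h : A.PosSemidef) : (msqrt A)ᴴ = msqrt A :=
  (msqrt_posSemidef h).1

open scoped MatrixOrder in
lemma msqrt_eq {A B : Matrix d d ℂ} (hA : A.PosSemidef) (hB : B.PosSemidef)
    (h : B * B = A) : msqrt A = B := by
  rw [msqrt_of hA]
  exact CFC.sqrt_unique h hB.nonneg

lemma posDef_of_isUnit {A : Matrix d d ℂ} (hA : A.PosSemidef) (h : IsUnit A.det) :
    A.PosDef := by
  refine posDef_iff_dotProduct_mulVec.mpr ⟨hA.1, fun x hx => ?_⟩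
  rcases lt_or_eq_of_le (hA.dotProduct_mulVec_nonneg x) with hlt | heq
  · exact hlt
  · exfalso; apply hx
    have h0 : A *ᵥ x = 0 := (hA.dotProduct_mulVec_zero_iff x).1 heq.symm
    have := congrArg (fun v => A⁻¹ *ᵥ v) h0
    simpa [Matrix.mulVec_mulVec, Matrix.nonsing_inv_mul _ h] using this

lemma msqrt_posDef {A : Matrix d d ℂ} (h : A.PosDef) : (msqrt A).PosDef := by
  have hs := msqrt_posSemidef h.posSemidef
  refine posDef_of_isUnit hs ?_
  have hd : (msqrt A).det * (msqrt A).det = A.det := by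
    rw [← det_mul, msqrt_mul_self h.posSemidef]
  have hdet : A.det ≠ 0 := h.det_pos.ne'
  refine isUnit_iff_ne_zero.2 fun h0 => hdet ?_
  rw [← hd, h0, mul_zero]

lemma msqrt_inv {A : Matrix d d ℂ} (h : A.PosDef) : msqrt A⁻¹ = (msqrt A)⁻¹ :=
  msqrt_eq h.inv.posSemidef ((msqrt_posDef h).inv.posSemidef) (by
    rw [← Matrix.mul_inv_rev, msqrt_mul_self h.posSemidef])

lemma commute_inv {A B : Matrix d d ℂ} (h : IsUnit A.det) (hc : B * A = A * B) :
    B * A⁻¹ = A⁻¹ * B := by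
  have h1 : A⁻¹ * (A * B) * A⁻¹ = B * A⁻¹ := by
    rw [← mul_assoc, Matrix.nonsing_inv_mul _ h, one_mul]
  have h2 : A⁻¹ * (A * B) * A⁻¹ = A⁻¹ * B := by
    rw [← hc, mul_assoc, mul_assoc, Matrix.mul_nonsing_inv _ h, mul_one]
  rw [← h1, h2]

lemma commute_msqrt_proj {A E : Matrix d d ℂ} (hA : A.PosSemidef)
    (hE : E.IsHermitian) (hE2 : E * E = E) (hc : E * A = A * E) :
    E * msqrt A = msqrt A * E := by
  set S := msqrt A with hS
  set V : Matrix d d ℂ := 1 - (E + E) with hV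
  have hVH : Vᴴ = V := by
    simp [hV, conjTranspose_sub, conjTranspose_add, hE.eq]
  have hVV : V * V = 1 := by
    simp only [hV, sub_mul, mul_sub, add_mul, mul_add, hE2, one_mul, mul_one]
    abel
  have hVA : V * A = A * V := by
    simp only [hV, sub_mul, mul_sub, add_mul, mul_add, hc, one_mul, mul_one]
  have hT : (V * S * V).PosSemidef := by
    have := (msqrt_posSemidef hA).mul_mul_conjTranspose_same V
    rwa [hVH] at this
  have hTT : (V * S * V) * (V * S * V) = A := by
    have : V * S * (V * V) * S * V = V * (S * S) * V := by rw [hVV]; noncomm_ring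
    calc (V * S * V) * (V * S * V) = V * S * (V * V) * S * V := by noncomm_ring
    _ = V * (S * S) * V := this
    _ = V * A * V := by rw [msqrt_mul_self hA]
    _ = A * (V * V) := by rw [hVA]; noncomm_ring
    _ = A := by rw [hVV, mul_one]
  have hSV : S = V * S * V := by rw [hS]; exact msqrt_eq hA hT hTT
  have hVS : V * S = S * V := by
    conv_lhs => rw [hSV]
    calc V * (V * S * V) = (V * V) * (S * V) := by noncomm_ring
    _ = S * V := by rw [hVV, one_mul]
  -- deduce E * S = S * E
  have h2 : E * S + E * S = S * E + S * E := by
    have h' := hVS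
    simp only [hV, sub_mul, mul_sub, add_mul, mul_add, one_mul, mul_one] at h'
    exact sub_right_inj.mp h'
  have h3 : (2:ℂ) • (E * S) = (2:ℂ) • (S * E) := by
    rw [two_smul, two_smul]; exact h2
  exact smul_right_injective (Matrix d d ℂ) (two_ne_zero' ℂ) h3


lemma trace_psd_nonneg {A : Matrix d d ℂ} (h : A.PosSemidef) : 0 ≤ A.trace := by
  rw [Matrix.trace]
  apply Finset.sum_nonneg
  intro i _
  have := h.dotProduct_mulVec_nonneg (Pi.single i 1)
  simpa [Matrix.mulVec_single, dotProduct, Pi.single_apply, Finset.sum_ite_eq] using this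

lemma trace_mul_psd_nonneg {A B : Matrix d d ℂ} (hA : A.PosSemidef) (hB : B.PosSemidef) :
    0 ≤ (A * B).trace := by
  set S := msqrt A with hS
  have h1 : A * B = S * (S * B) := by rw [← mul_assoc, msqrt_mul_self hA]
  have h2 : (S * B * S).PosSemidef := by
    have := hB.mul_mul_conjTranspose_same S
    rwa [msqrt_herm hA, ← hS] at this
  rw [h1, Matrix.trace_mul_comm]
  exact trace_psd_nonneg h2

lemma trace_conj_self_eq_zero {D : Matrix d d ℂ} (h : (Dᴴ * D).trace.re = 0) : D = 0 := by
  have hsum : (Dᴴ * D).trace.re = ∑ j, ∑ k, Complex.normSq (D k j) := by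
    rw [Matrix.trace]
    rw [Complex.re_sum]
    apply Finset.sum_congr rfl
    intro j _
    rw [Matrix.diag_apply, Matrix.mul_apply, Complex.re_sum]
    apply Finset.sum_congr rfl
    intro k _
    rw [Matrix.conjTranspose_apply]
    rw [Complex.star_def, ← Complex.normSq_eq_conj_mul_self, Complex.ofReal_re]
  rw [hsum] at h
  ext k j
  have : ∀ j' ∈ Finset.univ, ∀ k' ∈ Finset.univ, (0:ℝ) ≤ Complex.normSq (D k' j') := by
    intro _ _ _ _; exact Complex.normSq_nonneg _
  have hz : Complex.normSq (D k j) = 0 := by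
    have h1 : ∑ j, ∑ k, Complex.normSq (D k j) = 0 := h
    have h2 := (Finset.sum_eq_zero_iff_of_nonneg (fun j' _ => Finset.sum_nonneg (fun k' _ => Complex.normSq_nonneg _))).1 h1 j (Finset.mem_univ j)
    exact (Finset.sum_eq_zero_iff_of_nonneg (fun k' _ => Complex.normSq_nonneg _)).1 h2 k (Finset.mem_univ k)
  simpa using Complex.normSq_eq_zero.mp hz

lemma smul_psd {A : Matrix d d ℂ} (h : A.PosSemidef) {ε : ℝ} (hε : 0 ≤ ε) :
    ((ε : ℂ) • A).PosSemidef := by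
  refine PosSemidef.of_dotProduct_mulVec_nonneg ?_ ?_
  · show ((ε:ℂ) • A)ᴴ = _
    rw [Matrix.conjTranspose_smul, h.1.eq]
    simp
  · intro x
    rw [Matrix.smul_mulVec, dotProduct_smul]
    exact smul_nonneg (by exact_mod_cast hε) (h.dotProduct_mulVec_nonneg x)

lemma psd_add_smul_one_posDef {A : Matrix d d ℂ} (h : A.PosSemidef) {ε : ℝ} (hε : 0 < ε) :
    (A + (ε : ℂ) • 1).PosDef := by
  refine PosDef.of_dotProduct_mulVec_pos ?_ ?_
  · show (A + (ε:ℂ) • 1)ᴴ = _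
    rw [Matrix.conjTranspose_add, h.1.eq, Matrix.conjTranspose_smul]
    simp
  · intro x hx
    rw [Matrix.add_mulVec, dotProduct_add, Matrix.smul_mulVec,
      Matrix.one_mulVec, dotProduct_smul]
    refine add_pos_of_nonneg_of_pos (h.dotProduct_mulVec_nonneg x) ?_
    refine smul_pos ?_ ?_
    · exact_mod_cast hε
    · exact dotProduct_star_self_pos_iff.mpr hx


lemma trace_conj_self_re (D : Matrix d d ℂ) :
    (Dᴴ * D).trace.re = ∑ j, ∑ k, Complex.normSq (D k j) := by
  rw [Matrix.trace, Complex.re_sum]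
  apply Finset.sum_congr rfl
  intro j _
  rw [Matrix.diag_apply, Matrix.mul_apply, Complex.re_sum]
  apply Finset.sum_congr rfl
  intro k _
  rw [Matrix.conjTranspose_apply]
  rw [Complex.star_def, ← Complex.normSq_eq_conj_mul_self, Complex.ofReal_re]

lemma dot_star_self_re (w : d → ℂ) :
    (dotProduct (star w) w).re = ∑ i, Complex.normSq (w i) := by
  rw [dotProduct, Complex.re_sum]
  apply Finset.sum_congr rfl
  intro i _
  rw [Pi.star_apply, Complex.star_def, ← Complex.normSq_eq_conj_mul_self, Complex.ofReal_re]

lemma qf_le_trace {B : Matrix d d ℂ} (hB : B.PosSemidef) (v : d → ℂ) :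
    (dotProduct (star v) (B *ᵥ v)).re ≤ B.trace.re * (∑ j, Complex.normSq (v j)) := by
  set S := msqrt B with hS
  have hB' : B = Sᴴ * S := by rw [msqrt_herm hB, msqrt_mul_self hB]
  have hq : dotProduct (star v) (B *ᵥ v)
      = dotProduct (star (S *ᵥ v)) (S *ᵥ v) := by
    rw [hB', ← Matrix.mulVec_mulVec, Matrix.dotProduct_mulVec, Matrix.vecMul_conjTranspose,
      star_star]
  rw [hq, dot_star_self_re, hB', trace_conj_self_re]
  have hrow : ∀ i, Complex.normSq ((S *ᵥ v) i)
      ≤ (∑ j, Complex.normSq (S i j)) * (∑ j, Complex.normSq (v j)) := by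
    intro i
    have h1 : ‖(S *ᵥ v) i‖ ≤ ∑ j, ‖S i j‖ * ‖v j‖ := by
      rw [Matrix.mulVec, dotProduct]
      refine le_trans (norm_sum_le _ _) ?_
      apply le_of_eq; apply Finset.sum_congr rfl; intro j _; exact norm_mul _ _
    have h2 : (∑ j, ‖S i j‖ * ‖v j‖) ^ 2
        ≤ (∑ j, ‖S i j‖ ^ 2) * (∑ j, ‖v j‖ ^ 2) :=
      Finset.sum_mul_sq_le_sq_mul_sq _ _ _
    calc Complex.normSq ((S *ᵥ v) i) = ‖(S *ᵥ v) i‖ ^ 2 := (Complex.sq_norm _).symm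
    _ ≤ (∑ j, ‖S i j‖ * ‖v j‖) ^ 2 := by
        apply pow_le_pow_left₀ (norm_nonneg _) h1
    _ ≤ (∑ j, ‖S i j‖ ^ 2) * (∑ j, ‖v j‖ ^ 2) := h2
    _ = (∑ j, Complex.normSq (S i j)) * (∑ j, Complex.normSq (v j)) := by
        simp [Complex.sq_norm]
  calc ∑ i, Complex.normSq ((S *ᵥ v) i)
      ≤ ∑ i, (∑ j, Complex.normSq (S i j)) * (∑ j, Complex.normSq (v j)) :=
        Finset.sum_le_sum (fun i _ => hrow i)
  _ = (∑ i, ∑ j, Complex.normSq (S i j)) * (∑ j, Complex.normSq (v j)) := by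
        rw [Finset.sum_mul]
  _ = (∑ j, ∑ k, Complex.normSq (S k j)) * (∑ j, Complex.normSq (v j)) := by
        rw [Finset.sum_comm]

lemma dot_conj (B X : Matrix d d ℂ) (x : d → ℂ) :
    dotProduct (star x) ((Bᴴ * X * B) *ᵥ x)
      = dotProduct (star (B *ᵥ x)) (X *ᵥ (B *ᵥ x)) := by
  simp only [star_mulVec, Matrix.dotProduct_mulVec, vecMul_vecMul, Matrix.mulVec_mulVec,
    Matrix.mul_assoc]

lemma sum_mulVec' {ι : Type*} (s : Finset ι) (f : ι → Matrix d d ℂ) (x : d → ℂ) :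
    (∑ i ∈ s, f i) *ᵥ x = ∑ i ∈ s, f i *ᵥ x := by
  ext k
  simp only [Matrix.mulVec, dotProduct, Finset.sum_apply, Matrix.sum_apply,
    Finset.sum_mul]
  rw [Finset.sum_comm]

lemma dot_sum' {ι : Type*} (s : Finset ι) (a : d → ℂ) (v : ι → d → ℂ) :
    dotProduct a (∑ i ∈ s, v i) = ∑ i ∈ s, dotProduct a (v i) := by
  simp only [dotProduct, Finset.sum_apply, Finset.mul_sum]
  rw [Finset.sum_comm]

lemma commute_of_fix {E : Fin n → Matrix d d ℂ}
    (horth : ∀ i j, E i * E j = if i = j then E i else 0)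
    {X : Matrix d d ℂ} (hfix : ∑ i, E i * X * E i = X) (j : Fin n) :
    E j * X = X * E j := by
  have h1 : E j * X = E j * X * E j := by
    conv_lhs => rw [← hfix, Finset.mul_sum]
    rw [Finset.sum_eq_single j]
    · rw [← mul_assoc, ← mul_assoc, horth j j, if_pos rfl]
    · intro i _ hij
      rw [← mul_assoc, ← mul_assoc, horth j i, if_neg (fun h => hij h.symm), zero_mul, zero_mul]
    · intro h; exact absurd (Finset.mem_univ j) h
  have h2 : X * E j = E j * X * E j := by
    conv_lhs => rw [← hfix, Finset.sum_mul]
    rw [Finset.sum_eq_single j]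
    · rw [mul_assoc, mul_assoc, horth j j, if_pos rfl, ← mul_assoc]
    · intro i _ hij
      rw [mul_assoc, mul_assoc, horth i j, if_neg hij, mul_zero, mul_zero]
    · intro h; exact absurd (Finset.mem_univ j) h
  rw [h1, ← h2]

lemma fix_of_commute {E : Fin n → Matrix d d ℂ}
    (horth : ∀ i j, E i * E j = if i = j then E i else 0)
    (hsum : ∑ i, E i = (1 : Matrix d d ℂ))
    {X : Matrix d d ℂ} (hc : ∀ i, E i * X = X * E i) :
    ∑ i, E i * X * E i = X := by
  calc ∑ i, E i * X * E i = ∑ i, X * (E i * E i) := by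
        apply Finset.sum_congr rfl; intro i _; rw [hc i, mul_assoc]
  _ = ∑ i, X * E i := by
        apply Finset.sum_congr rfl; intro i _; rw [horth i i, if_pos rfl]
  _ = X := by rw [← Finset.mul_sum, hsum, mul_one]

lemma pinch_swap_trace {E : Fin n → Matrix d d ℂ} (A B : Matrix d d ℂ) :
    ((∑ i, E i * A * E i) * B).trace = (A * ∑ i, E i * B * E i).trace := by
  rw [Finset.sum_mul, Matrix.trace_sum, Finset.mul_sum, Matrix.trace_sum]
  apply Finset.sum_congr rfl
  intro i _
  calc (E i * A * E i * B).trace = ((E i) * (A * E i * B)).trace := by noncomm_ring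
  _ = ((A * E i * B) * E i).trace := Matrix.trace_mul_comm _ _
  _ = (A * (E i * B * E i)).trace := by noncomm_ring

lemma pinch_psd {E : Fin n → Matrix d d ℂ}
    (hherm : ∀ i, (E i).IsHermitian)
    {P : Matrix d d ℂ} (hP : P.PosSemidef) :
    (∑ i, E i * P * E i).PosSemidef := by
  refine PosSemidef.of_dotProduct_mulVec_nonneg ?_ ?_
  · show (∑ i, E i * P * E i)ᴴ = _
    rw [Matrix.conjTranspose_sum]
    apply Finset.sum_congr rfl
    intro i _
    have := (hP.conjTranspose_mul_mul_same (E i)).1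
    rwa [(hherm i).eq] at this
  · intro x
    rw [sum_mulVec', dot_sum']
    apply Finset.sum_nonneg
    intro i _
    rw [show E i * P * E i = (E i)ᴴ * P * (E i) by rw [(hherm i).eq], dot_conj]
    exact hP.dotProduct_mulVec_nonneg _

lemma pinch_posDef {E : Fin n → Matrix d d ℂ}
    (hherm : ∀ i, (E i).IsHermitian)
    (hsum : ∑ i, E i = (1 : Matrix d d ℂ))
    {P : Matrix d d ℂ} (hP : P.PosDef) :
    (∑ i, E i * P * E i).PosDef := by
  refine posDef_iff_dotProduct_mulVec.mpr ⟨(pinch_psd hherm hP.posSemidef).1, fun x hx => ?_⟩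
  have key : dotProduct (star x) ((∑ i, E i * P * E i) *ᵥ x)
      = ∑ i, dotProduct (star (E i *ᵥ x)) (P *ᵥ (E i *ᵥ x)) := by
    rw [sum_mulVec', dot_sum']
    apply Finset.sum_congr rfl
    intro i _
    rw [show E i * P * E i = (E i)ᴴ * P * (E i) by rw [(hherm i).eq], dot_conj]
  rw [key]
  have hex : ∃ i, E i *ᵥ x ≠ 0 := by
    by_contra hall
    push_neg at hall
    apply hx
    have : (∑ i, E i) *ᵥ x = 0 := by
      rw [sum_mulVec']
      exact Finset.sum_eq_zero (fun i _ => hall i)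
    rwa [hsum, Matrix.one_mulVec] at this
  obtain ⟨i0, hi0⟩ := hex
  refine Finset.sum_pos' (fun i _ => hP.posSemidef.dotProduct_mulVec_nonneg _) ⟨i0, Finset.mem_univ i0, hP.dotProduct_mulVec_pos hi0⟩


lemma key_ineq {Z R : Matrix d d ℂ} (hZ : Z.PosDef) (hR : R.PosSemidef) :
    2 * R.trace.re ≤ Z.trace.re + (R * Z⁻¹ * R).trace.re ∧
    (Z.trace.re + (R * Z⁻¹ * R).trace.re ≤ 2 * R.trace.re → R = Z) := by
  set Zh := msqrt Z with hZhdef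
  have hZhpd : Zh.PosDef := msqrt_posDef hZ
  have hZhdet : IsUnit Zh.det := hZhpd.det_pos.ne'.isUnit
  have hZh2 : Zh * Zh = Z := msqrt_mul_self hZ.posSemidef
  have hZhH : Zhᴴ = Zh := msqrt_herm hZ.posSemidef
  have hZhinvH : (Zh⁻¹)ᴴ = Zh⁻¹ := by rw [Matrix.conjTranspose_nonsing_inv, hZhH]
  set D : Matrix d d ℂ := Zh - Zh⁻¹ * R with hDdef
  have hDH : Dᴴ = Zh - R * Zh⁻¹ := by
    rw [hDdef, Matrix.conjTranspose_sub, Matrix.conjTranspose_mul, hZhinvH, hZhH, hR.1.eq]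
  have e1 : Zh * (Zh⁻¹ * R) = R := by
    rw [← mul_assoc, Matrix.mul_nonsing_inv _ hZhdet, one_mul]
  have e2 : R * Zh⁻¹ * Zh = R := by
    rw [mul_assoc, Matrix.nonsing_inv_mul _ hZhdet, mul_one]
  have e3 : R * Zh⁻¹ * (Zh⁻¹ * R) = R * Z⁻¹ * R := by
    rw [← hZh2, Matrix.mul_inv_rev]
    noncomm_ring
  have hDD : Dᴴ * D = Z - R - R + R * Z⁻¹ * R := by
    rw [hDH, hDdef, sub_mul, mul_sub, mul_sub, e1, e2, e3, hZh2]
    abel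
  have htr : (Dᴴ * D).trace = Z.trace + (R * Z⁻¹ * R).trace - (R.trace + R.trace) := by
    rw [hDD]
    simp only [Matrix.trace_add, Matrix.trace_sub]
    abel
  have hpos : 0 ≤ (Dᴴ * D).trace := trace_psd_nonneg (Matrix.posSemidef_conjTranspose_mul_self D)
  have hposre : 0 ≤ (Dᴴ * D).trace.re := (Complex.nonneg_iff.1 hpos).1
  have htrre : (Dᴴ * D).trace.re
      = Z.trace.re + (R * Z⁻¹ * R).trace.re - (R.trace.re + R.trace.re) := by
    rw [htr]; simp [Complex.sub_re, Complex.add_re]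
  constructor
  · rw [two_mul]; linarith
  · intro hle
    have hzero : (Dᴴ * D).trace.re = 0 := by rw [htrre]; rw [two_mul] at hle; linarith
    have hD0 : D = 0 := trace_conj_self_eq_zero hzero
    have h5 : Zh⁻¹ * R = Zh := (sub_eq_zero.mp (hDdef ▸ hD0)).symm
    calc R = Zh * (Zh⁻¹ * R) := e1.symm
    _ = Zh * Zh := by rw [h5]
    _ = Z := hZh2

lemma posDef_conj {A B : Matrix d d ℂ} (hA : A.PosDef) (hB : IsUnit B.det) :
    (Bᴴ * A * B).PosDef := by
  refine posDef_of_isUnit (hA.posSemidef.conjTranspose_mul_mul_same B) ?_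
  rw [Matrix.det_mul, Matrix.det_mul, Matrix.det_conjTranspose]
  exact (hB.star.mul (hA.det_pos.ne'.isUnit)).mul hB

end Helper
open Helper in
/-- Let `{E i}` be an orthogonal resolution of identity and
`Λ X = ∑ i, E i * X * E i` the associated pinching channel. For `P` positive definite
and `C` positive definite with `Λ C = C`, letting `M = (Λ P)⁻¹ # C`, we have
`Λ (M P M) = C` and `M P M` is the unique maximizer of `Q ↦ F(P,Q)` over
`{Q PSD : Λ Q = C}`. -/
theorem pinching_projection
    {d : Type*} [Fintype d] [DecidableEq d] {n : ℕ}
    (E : Fin n → Matrix d d ℂ)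
    (hherm : ∀ i, (E i).IsHermitian)
    (horth : ∀ i j, E i * E j = if i = j then E i else 0)
    (hsum : ∑ i, E i = (1 : Matrix d d ℂ))
    (P : Matrix d d ℂ) (hP : P.PosDef)
    (C : Matrix d d ℂ) (hC : C.PosDef)
    (hCfix : ∑ i, E i * C * E i = C)
    (M : Matrix d d ℂ) (hM : M = geomMean (∑ i, E i * P * E i)⁻¹ C) :
    (∑ i, E i * (M * P * M) * E i) = C ∧ (M * P * M).PosSemidef ∧
    ∀ Q : Matrix d d ℂ, Q.PosSemidef → (∑ i, E i * Q * E i) = C →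
      fidelity P Q ≤ fidelity P (M * P * M) ∧
      (fidelity P Q = fidelity P (M * P * M) → Q = M * P * M) := by
  have hEi2 : ∀ i, E i * E i = E i := fun i => by rw [horth i i, if_pos rfl]
  set A₀ : Matrix d d ℂ := ∑ i, E i * P * E i with hA₀def
  have hA₀ : A₀.PosDef := pinch_posDef hherm hsum hP
  have hA₀det : IsUnit A₀.det := hA₀.det_pos.ne'.isUnit
  have hA₀inv : (A₀⁻¹).PosDef := hA₀.inv
  set T : Matrix d d ℂ := msqrt A₀ with hTdef
  have hT : T.PosDef := msqrt_posDef hA₀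
  have hTdet : IsUnit T.det := hT.det_pos.ne'.isUnit
  set S₁ : Matrix d d ℂ := msqrt A₀⁻¹ with hS₁def
  have hS₁T : S₁ = T⁻¹ := msqrt_inv hA₀
  have hS₁ : S₁.PosDef := msqrt_posDef hA₀inv
  have hS₁det : IsUnit S₁.det := hS₁.det_pos.ne'.isUnit
  set X : Matrix d d ℂ := S₁⁻¹ * C * S₁⁻¹ with hXdef
  have hX : X.PosDef := by
    rw [hXdef, show S₁⁻¹ * C * S₁⁻¹ = (S₁⁻¹)ᴴ * C * S₁⁻¹ by
      rw [Matrix.conjTranspose_nonsing_inv, msqrt_herm hA₀inv.posSemidef]]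
    exact posDef_conj hC (hS₁.inv.det_pos.ne'.isUnit)
  set S₂ : Matrix d d ℂ := msqrt X with hS₂def
  have hS₂ : S₂.PosDef := msqrt_posDef hX
  have hMeq : M = S₁ * S₂ * S₁ := hM
  have hMpd : M.PosDef := by
    rw [hMeq, show S₁ * S₂ * S₁ = S₁ᴴ * S₂ * S₁ by rw [msqrt_herm hA₀inv.posSemidef]]
    exact posDef_conj hS₂ hS₁det
  have hMH : Mᴴ = M := hMpd.1.eq
  have hMdet : IsUnit M.det := hMpd.det_pos.ne'.isUnit
  have hMinv : (M⁻¹).PosDef := hMpd.inv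
  -- Riccati : M * A₀ * M = C
  have hRic : M * A₀ * M = C := by
    have hTA : T * T = A₀ := msqrt_mul_self hA₀.posSemidef
    have hmid : S₁ * A₀ * S₁ = 1 := by
      rw [hS₁T, ← hTA]
      rw [show T⁻¹ * (T * T) * T⁻¹ = (T⁻¹ * T) * (T * T⁻¹) by noncomm_ring]
      rw [Matrix.nonsing_inv_mul _ hTdet, Matrix.mul_nonsing_inv _ hTdet, one_mul]
    have hS₂2 : S₂ * S₂ = X := msqrt_mul_self hX.posSemidef
    calc M * A₀ * M = S₁ * S₂ * (S₁ * A₀ * S₁) * S₂ * S₁ := by rw [hMeq]; noncomm_ring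
    _ = S₁ * (S₂ * S₂) * S₁ := by rw [hmid]; noncomm_ring
    _ = S₁ * (S₁⁻¹ * C * S₁⁻¹) * S₁ := by rw [hS₂2, hXdef]
    _ = (S₁ * S₁⁻¹) * C * (S₁⁻¹ * S₁) := by noncomm_ring
    _ = C := by
        rw [Matrix.mul_nonsing_inv _ hS₁det, Matrix.nonsing_inv_mul _ hS₁det, one_mul, mul_one]
  -- commutation with the projections
  have hEC : ∀ i, E i * C = C * E i := fun i => commute_of_fix horth hCfix i
  have hEA₀ : ∀ j, E j * A₀ = A₀ * E j := by
    intro j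
    have h1 : E j * A₀ = E j * P * E j := by
      rw [hA₀def, Finset.mul_sum, Finset.sum_eq_single j]
      · rw [← mul_assoc, ← mul_assoc, hEi2 j]
      · intro i _ hij
        rw [← mul_assoc, ← mul_assoc, horth j i, if_neg (fun h => hij h.symm), zero_mul, zero_mul]
      · intro h; exact absurd (Finset.mem_univ j) h
    have h2 : A₀ * E j = E j * P * E j := by
      rw [hA₀def, Finset.sum_mul, Finset.sum_eq_single j]
      · rw [mul_assoc, mul_assoc, hEi2 j, ← mul_assoc]
      · intro i _ hij
        rw [mul_assoc, mul_assoc, horth i j, if_neg hij, mul_zero, mul_zero]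
      · intro h; exact absurd (Finset.mem_univ j) h
    rw [h1, ← h2]
  have hEA₀inv : ∀ i, E i * A₀⁻¹ = A₀⁻¹ * E i := fun i => commute_inv hA₀det (hEA₀ i)
  have hES₁ : ∀ i, E i * S₁ = S₁ * E i := fun i =>
    commute_msqrt_proj hA₀inv.posSemidef (hherm i) (hEi2 i) (hEA₀inv i)
  have hES₁inv : ∀ i, E i * S₁⁻¹ = S₁⁻¹ * E i := fun i => commute_inv hS₁det (hES₁ i)
  have hEX : ∀ i, E i * X = X * E i := by
    intro i
    rw [hXdef]
    calc E i * (S₁⁻¹ * C * S₁⁻¹) = (E i * S₁⁻¹) * C * S₁⁻¹ := by noncomm_ring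
    _ = S₁⁻¹ * (E i * C) * S₁⁻¹ := by rw [hES₁inv i]; noncomm_ring
    _ = S₁⁻¹ * C * (E i * S₁⁻¹) := by rw [hEC i]; noncomm_ring
    _ = S₁⁻¹ * C * S₁⁻¹ * E i := by rw [hES₁inv i]; noncomm_ring
  have hES₂ : ∀ i, E i * S₂ = S₂ * E i := fun i =>
    commute_msqrt_proj hX.posSemidef (hherm i) (hEi2 i) (hEX i)
  have hEM : ∀ i, E i * M = M * E i := by
    intro i
    rw [hMeq]
    calc E i * (S₁ * S₂ * S₁) = (E i * S₁) * S₂ * S₁ := by noncomm_ring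
    _ = S₁ * (E i * S₂) * S₁ := by rw [hES₁ i]; noncomm_ring
    _ = S₁ * S₂ * (E i * S₁) := by rw [hES₂ i]; noncomm_ring
    _ = S₁ * S₂ * S₁ * E i := by rw [hES₁ i]; noncomm_ring
  have hEMinv : ∀ i, E i * M⁻¹ = M⁻¹ * E i := fun i => commute_inv hMdet (hEM i)
  -- Goal 1
  have goal1 : (∑ i, E i * (M * P * M) * E i) = C := by
    have : ∀ i, E i * (M * P * M) * E i = M * (E i * P * E i) * M := by
      intro i
      calc E i * (M * P * M) * E i = (E i * M) * P * (M * E i) := by noncomm_ring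
      _ = (M * E i) * P * (E i * M) := by rw [hEM i, ← hEM i]
      _ = M * (E i * P * E i) * M := by noncomm_ring
    rw [Finset.sum_congr rfl (fun i _ => this i), ← hRic, hA₀def, Finset.mul_sum,
      Finset.sum_mul]
  -- Goal 2
  have goal2 : (M * P * M).PosSemidef := by
    have := hP.posSemidef.mul_mul_conjTranspose_same M
    rwa [hMH] at this
  refine ⟨goal1, goal2, ?_⟩
  -- trace helper : for any pinching-fixed W and pinched-constraint matrices
  have htau0 : (C * M⁻¹).trace = (P * M).trace := by
    calc (C * M⁻¹).trace = (M * A₀ * (M * M⁻¹)).trace := by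
          rw [show M * A₀ * (M * M⁻¹) = (M * A₀ * M) * M⁻¹ from by noncomm_ring, hRic]
    _ = (M * A₀).trace := by rw [Matrix.mul_nonsing_inv _ hMdet, mul_one]
    _ = (A₀ * M).trace := Matrix.trace_mul_comm _ _
    _ = (P * ∑ i, E i * M * E i).trace := by rw [hA₀def]; exact pinch_swap_trace P M
    _ = (P * M).trace := by rw [fix_of_commute horth hsum hEM]
  intro Q hQ hQfix
  have htau2 : (Q * M⁻¹).trace = (P * M).trace := by
    calc (Q * M⁻¹).trace = (Q * ∑ i, E i * M⁻¹ * E i).trace := by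
          rw [fix_of_commute horth hsum hEMinv]
    _ = ((∑ i, E i * Q * E i) * M⁻¹).trace := (pinch_swap_trace Q M⁻¹).symm
    _ = (C * M⁻¹).trace := by rw [hQfix]
    _ = (P * M).trace := htau0
  -- value at the candidate maximizer
  have hfid' : fidelity P (M * P * M) = ((P * M).trace).re := by
    set K' : Matrix d d ℂ := msqrt (M * P * M) with hK'def
    have hK'H : K'ᴴ = K' := msqrt_herm goal2
    have hK'2 : K' * K' = M * P * M := msqrt_mul_self goal2
    have hApsd : (K' * P * K').PosSemidef := by
      have := hP.posSemidef.conjTranspose_mul_mul_same K'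
      rwa [hK'H] at this
    have hR'psd : (K' * M⁻¹ * K').PosSemidef := by
      have := hMinv.posSemidef.conjTranspose_mul_mul_same K'
      rwa [hK'H] at this
    have hR'sq : (K' * M⁻¹ * K') * (K' * M⁻¹ * K') = K' * P * K' := by
      calc (K' * M⁻¹ * K') * (K' * M⁻¹ * K') = K' * M⁻¹ * (K' * K') * M⁻¹ * K' := by
            noncomm_ring
      _ = K' * (M⁻¹ * M) * P * (M * M⁻¹) * K' := by rw [hK'2]; noncomm_ring
      _ = K' * P * K' := by
            rw [Matrix.nonsing_inv_mul _ hMdet, Matrix.mul_nonsing_inv _ hMdet]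
            noncomm_ring
    have hAeq : msqrt (K' * P * K') = K' * M⁻¹ * K' := msqrt_eq hApsd hR'psd hR'sq
    show (msqrt (K' * P * K')).trace.re = ((P * M).trace).re
    rw [hAeq]
    rw [show (K' * M⁻¹ * K').trace = ((P * M).trace) from ?_]
    calc (K' * M⁻¹ * K').trace = (K' * K' * M⁻¹).trace := Matrix.trace_mul_cycle _ _ _
    _ = (M * P * (M * M⁻¹)).trace := by rw [hK'2]; rw [show (M * P * M) * M⁻¹ = M * P * (M * M⁻¹) from by noncomm_ring]
    _ = (M * P).trace := by rw [Matrix.mul_nonsing_inv _ hMdet, mul_one]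
    _ = (P * M).trace := Matrix.trace_mul_comm _ _
  -- main inequality machine
  have key : ∀ ε : ℝ, 0 < ε → ∃ G : Matrix d d ℂ, G.PosSemidef ∧
      (∀ v, Q *ᵥ v = 0 → G *ᵥ v = M *ᵥ v) ∧
      2 * fidelity P Q + (P * G).trace.re ≤ 2 * ((P * M).trace).re + ε * (Fintype.card d) := by
    intro ε hε
    set K : Matrix d d ℂ := msqrt Q with hKdef
    have hKH : Kᴴ = K := msqrt_herm hQ
    have hK2 : K * K = Q := msqrt_mul_self hQ
    set N : Matrix d d ℂ := msqrt M with hNdef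
    have hN : N.PosDef := msqrt_posDef hMpd
    have hNdet : IsUnit N.det := hN.det_pos.ne'.isUnit
    have hNH : Nᴴ = N := msqrt_herm hMpd.posSemidef
    have hN2 : N * N = M := msqrt_mul_self hMpd.posSemidef
    have hNinvH : (N⁻¹)ᴴ = N⁻¹ := by rw [Matrix.conjTranspose_nonsing_inv, hNH]
    have hNinv2 : N⁻¹ * N⁻¹ = M⁻¹ := by rw [← Matrix.mul_inv_rev, hN2]
    set L : Matrix d d ℂ := N⁻¹ * K with hLdef
    have hLH : Lᴴ = K * N⁻¹ := by rw [hLdef, Matrix.conjTranspose_mul, hKH, hNinvH]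
    have hHL : Lᴴ * L = K * M⁻¹ * K := by
      rw [hLH, hLdef, show K * N⁻¹ * (N⁻¹ * K) = K * (N⁻¹ * N⁻¹) * K from by noncomm_ring,
        hNinv2]
    set W : Matrix d d ℂ := L * Lᴴ + (ε:ℂ) • 1 with hWdef
    have hWpd : W.PosDef := psd_add_smul_one_posDef (Matrix.posSemidef_self_mul_conjTranspose L) hε
    have hWdet : IsUnit W.det := hWpd.det_pos.ne'.isUnit
    set Z : Matrix d d ℂ := K * M⁻¹ * K + (ε:ℂ) • 1 with hZdef
    have hKMK : (K * M⁻¹ * K).PosSemidef := by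
      have := hMinv.posSemidef.conjTranspose_mul_mul_same K
      rwa [hKH] at this
    have hZpd : Z.PosDef := psd_add_smul_one_posDef hKMK hε
    have hZdet : IsUnit Z.det := hZpd.det_pos.ne'.isUnit
    have hswap : L * Z = W * L := by
      rw [hZdef, hWdef, ← hHL, mul_add, add_mul]
      congr 1
      · noncomm_ring
      · rw [mul_smul_comm, mul_one, smul_mul_assoc, one_mul]
    have hswap' : L * Z⁻¹ = W⁻¹ * L := by
      calc L * Z⁻¹ = W⁻¹ * (W * (L * Z⁻¹)) := by
            rw [← mul_assoc, Matrix.nonsing_inv_mul _ hWdet, one_mul]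
      _ = W⁻¹ * ((W * L) * Z⁻¹) := by noncomm_ring
      _ = W⁻¹ * ((L * Z) * Z⁻¹) := by rw [hswap]
      _ = W⁻¹ * L := by rw [mul_assoc, Matrix.mul_nonsing_inv _ hZdet, mul_one]
    set G : Matrix d d ℂ := (ε:ℂ) • (N * W⁻¹ * N) with hGdef
    have hGpsd : G.PosSemidef := by
      refine smul_psd ?_ hε.le
      have := hWpd.inv.posSemidef.conjTranspose_mul_mul_same N
      rwa [hNH] at this
    have hNL : N * L = K := by
      rw [hLdef, ← mul_assoc, Matrix.mul_nonsing_inv _ hNdet, one_mul]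
    have hLHN : Lᴴ * N = K := by
      rw [hLH, mul_assoc, Matrix.nonsing_inv_mul _ hNdet, mul_one]
    have hKZK : K * Z⁻¹ * K = N * (W⁻¹ * (L * Lᴴ)) * N := by
      calc K * Z⁻¹ * K = (N * L) * Z⁻¹ * (Lᴴ * N) := by rw [hNL, hLHN]
      _ = N * ((L * Z⁻¹) * Lᴴ) * N := by noncomm_ring
      _ = N * ((W⁻¹ * L) * Lᴴ) * N := by rw [hswap']
      _ = N * (W⁻¹ * (L * Lᴴ)) * N := by noncomm_ring
    have hGeq : K * Z⁻¹ * K = M - G := by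
      rw [hKZK, hGdef]
      have hsub : W⁻¹ * (L * Lᴴ) = 1 - (ε:ℂ) • W⁻¹ := by
        have hLL : L * Lᴴ = W - (ε:ℂ) • 1 := by rw [hWdef]; abel
        rw [hLL, mul_sub, Matrix.nonsing_inv_mul _ hWdet, mul_smul_comm, mul_one]
      rw [hsub, mul_sub, sub_mul, mul_one, hN2, mul_smul_comm, smul_mul_assoc]
    have hG' : G = M - K * Z⁻¹ * K := by rw [hGeq]; abel
    have htrZ : Z.trace = (P * M).trace + (ε:ℂ) * (Fintype.card d) := by
      rw [hZdef, Matrix.trace_add, Matrix.trace_smul, Matrix.trace_one, smul_eq_mul]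
      congr 1
      calc (K * M⁻¹ * K).trace = (K * K * M⁻¹).trace := Matrix.trace_mul_cycle _ _ _
      _ = (Q * M⁻¹).trace := by rw [hK2]
      _ = (P * M).trace := htau2
    set A : Matrix d d ℂ := K * P * K with hAdef
    have hApsd : A.PosSemidef := by
      have := hP.posSemidef.conjTranspose_mul_mul_same K
      rwa [hKH] at this
    set R : Matrix d d ℂ := msqrt A with hRdef
    have hRpsd : R.PosSemidef := msqrt_posSemidef hApsd
    have hR2 : R * R = A := msqrt_mul_self hApsd
    have hfidQ : fidelity P Q = R.trace.re := rfl
    have htrR : (R * Z⁻¹ * R).trace = (P * M).trace - (P * G).trace := by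
      calc (R * Z⁻¹ * R).trace = (R * R * Z⁻¹).trace := Matrix.trace_mul_cycle _ _ _
      _ = ((K * P) * (K * Z⁻¹)).trace := by rw [hR2, hAdef, ← mul_assoc, mul_assoc]
      _ = ((K * Z⁻¹) * (K * P)).trace := Matrix.trace_mul_comm _ _
      _ = (P * (K * Z⁻¹ * K)).trace := by
            rw [show (K * Z⁻¹) * (K * P) = (K * Z⁻¹ * K) * P from by noncomm_ring]
            exact Matrix.trace_mul_comm _ _
      _ = (P * M).trace - (P * G).trace := by rw [hGeq, mul_sub, Matrix.trace_sub]
    obtain ⟨hineq, _⟩ := key_ineq hZpd hRpsd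
    refine ⟨G, hGpsd, ?_, ?_⟩
    · intro v hv
      have hKv : K *ᵥ v = 0 := by
        have hdc := dot_conj K (1 : Matrix d d ℂ) v
        rw [hKH, mul_one, hK2, Matrix.one_mulVec, hv, dotProduct_zero] at hdc
        exact dotProduct_star_self_eq_zero.mp hdc.symm
      have hz : (K * Z⁻¹ * K) *ᵥ v = 0 := by
        rw [← Matrix.mulVec_mulVec, hKv, Matrix.mulVec_zero]
      rw [hG', Matrix.sub_mulVec, hz, sub_zero]
    · rw [hfidQ]
      have h1 : Z.trace.re = ((P * M).trace).re + ε * (Fintype.card d) := by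
        rw [htrZ, Complex.add_re]
        congr 1
        rw [show ((ε:ℂ) * (Fintype.card d : ℂ)) = ((ε * (Fintype.card d) : ℝ) : ℂ) from by
          push_cast; ring]
        exact Complex.ofReal_re _
      have h2 : (R * Z⁻¹ * R).trace.re = ((P * M).trace).re - ((P * G).trace).re := by
        rw [htrR, Complex.sub_re]
      linarith
  have part1 : fidelity P Q ≤ fidelity P (M * P * M) := by
    rw [hfid']
    have hF : ∀ ε' : ℝ, 0 < ε' → fidelity P Q ≤ ((P * M).trace).re + ε' := by
      intro ε' hε'
      obtain ⟨G, hGpsd, -, hle⟩ := key (ε' / (Fintype.card d + 1)) (by positivity)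
      have hPG : 0 ≤ (P * G).trace.re :=
        (Complex.nonneg_iff.1 (trace_mul_psd_nonneg hP.posSemidef hGpsd)).1
      have hc0 : (0:ℝ) ≤ (Fintype.card d : ℝ) := Nat.cast_nonneg _
      have hcard : (ε' / ((Fintype.card d : ℝ) + 1)) * (Fintype.card d) ≤ ε' := by
        rw [div_mul_eq_mul_div, div_le_iff₀ (by positivity)]
        nlinarith
      linarith
    exact le_of_forall_pos_le_add hF
  refine ⟨part1, ?_⟩
  intro heq
  have heqτ : fidelity P Q = ((P * M).trace).re := by rw [heq, hfid']
  -- Step A : Q is positive definite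
  have hQpd : Q.PosDef := by
    by_contra hnpd
    obtain ⟨v, hv0, hQv⟩ : ∃ v, v ≠ 0 ∧ Q *ᵥ v = 0 := by
      by_contra hno
      push_neg at hno
      apply hnpd
      refine posDef_iff_dotProduct_mulVec.mpr ⟨hQ.1, fun x hx => ?_⟩
      rcases lt_or_eq_of_le (hQ.dotProduct_mulVec_nonneg x) with h | h
      · exact h
      · exact absurd ((hQ.dotProduct_mulVec_zero_iff x).1 h.symm) (hno x hx)
    set Ph : Matrix d d ℂ := msqrt P with hPhdef
    have hPh : Ph.PosDef := msqrt_posDef hP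
    have hPhdet : IsUnit Ph.det := hPh.det_pos.ne'.isUnit
    have hPhH : Phᴴ = Ph := msqrt_herm hP.posSemidef
    have hPh2 : Ph * Ph = P := msqrt_mul_self hP.posSemidef
    set u : d → ℂ := Ph⁻¹ *ᵥ v with hudef
    have hPhu : Ph *ᵥ u = v := by
      rw [hudef, Matrix.mulVec_mulVec, Matrix.mul_nonsing_inv _ hPhdet, Matrix.one_mulVec]
    set c : ℝ := (dotProduct (star v) (M *ᵥ v)).re with hcdef
    have hcpos : 0 < c := (Complex.pos_iff.1 (hMpd.dotProduct_mulVec_pos hv0)).1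
    set sg : ℝ := ∑ j, Complex.normSq (u j) with hsgdef
    have hsg0 : 0 ≤ sg := Finset.sum_nonneg fun j _ => Complex.normSq_nonneg _
    have hc0 : (0:ℝ) ≤ (Fintype.card d : ℝ) := Nat.cast_nonneg _
    have hbound : ∀ ε : ℝ, 0 < ε → c ≤ ε * ((Fintype.card d : ℝ) * sg) := by
      intro ε hε
      obtain ⟨G, hGpsd, hGv, hle⟩ := key ε hε
      have hPGle : (P * G).trace.re ≤ ε * (Fintype.card d) := by
        rw [heqτ] at hle
        linarith
      have hB : (Ph * G * Ph).PosSemidef := by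
        have := hGpsd.conjTranspose_mul_mul_same Ph
        rwa [hPhH] at this
      have hBtr : (Ph * G * Ph).trace = (P * G).trace := by
        calc (Ph * G * Ph).trace = (Ph * (G * Ph)).trace := by rw [mul_assoc]
        _ = ((G * Ph) * Ph).trace := Matrix.trace_mul_comm _ _
        _ = (G * P).trace := by rw [mul_assoc, hPh2]
        _ = (P * G).trace := Matrix.trace_mul_comm _ _
      have hq := qf_le_trace hB u
      have hqf : (dotProduct (star u) ((Ph * G * Ph) *ᵥ u)).re = c := by
        have hdc := dot_conj Ph G u
        rw [hPhH, hPhu, hGv v hQv] at hdc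
        rw [hdc, hcdef]
      rw [hqf, hBtr] at hq
      calc c ≤ (P * G).trace.re * sg := hq
      _ ≤ ε * (Fintype.card d : ℝ) * sg := by
          apply mul_le_mul_of_nonneg_right hPGle hsg0
      _ = ε * ((Fintype.card d : ℝ) * sg) := by ring
    have hfin : c ≤ 0 := by
      apply le_of_forall_pos_le_add
      intro δ hδ
      have hKpos : (0:ℝ) < (Fintype.card d : ℝ) * sg + 1 := by nlinarith
      have := hbound (δ / ((Fintype.card d : ℝ) * sg + 1)) (by positivity)
      have h2 : (δ / ((Fintype.card d : ℝ) * sg + 1)) * ((Fintype.card d : ℝ) * sg) ≤ δ := by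
        rw [div_mul_eq_mul_div, div_le_iff₀ hKpos]
        nlinarith
      linarith
    linarith
  -- Step B : conclude Q = M * P * M
  set K : Matrix d d ℂ := msqrt Q with hKdef
  have hKpd : K.PosDef := msqrt_posDef hQpd
  have hKdet : IsUnit K.det := hKpd.det_pos.ne'.isUnit
  have hKH : Kᴴ = K := msqrt_herm hQ
  have hK2 : K * K = Q := msqrt_mul_self hQ
  have hZ0 : (K * M⁻¹ * K).PosDef := by
    rw [show K * M⁻¹ * K = Kᴴ * M⁻¹ * K from by rw [hKH]]
    exact posDef_conj hMinv hKdet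
  have hZ0det : IsUnit (K * M⁻¹ * K).det := hZ0.det_pos.ne'.isUnit
  set A : Matrix d d ℂ := K * P * K with hAdef
  have hApsd : A.PosSemidef := by
    have := hP.posSemidef.conjTranspose_mul_mul_same K
    rwa [hKH] at this
  set R : Matrix d d ℂ := msqrt A with hRdef
  have hRpsd : R.PosSemidef := msqrt_posSemidef hApsd
  have hR2 : R * R = A := msqrt_mul_self hApsd
  have hfidQ : fidelity P Q = R.trace.re := rfl
  have hZ0inv : (K * M⁻¹ * K)⁻¹ = K⁻¹ * (M * K⁻¹) := by
    rw [Matrix.mul_inv_rev, Matrix.mul_inv_rev, Matrix.nonsing_inv_nonsing_inv _ hMdet]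
  have htrZ0 : (K * M⁻¹ * K).trace = (P * M).trace := by
    calc (K * M⁻¹ * K).trace = (K * K * M⁻¹).trace := Matrix.trace_mul_cycle _ _ _
    _ = (Q * M⁻¹).trace := by rw [hK2]
    _ = (P * M).trace := htau2
  have htrRZR : (R * (K * M⁻¹ * K)⁻¹ * R).trace = (P * M).trace := by
    calc (R * (K * M⁻¹ * K)⁻¹ * R).trace = (R * R * (K * M⁻¹ * K)⁻¹).trace :=
          Matrix.trace_mul_cycle _ _ _
    _ = ((K * P * K) * (K⁻¹ * (M * K⁻¹))).trace := by rw [hR2, hAdef, hZ0inv]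
    _ = (K * (P * M) * K⁻¹).trace := by
          rw [show (K * P * K) * (K⁻¹ * (M * K⁻¹)) = K * P * (K * K⁻¹) * M * K⁻¹ from by
            noncomm_ring]
          rw [Matrix.mul_nonsing_inv _ hKdet]
          rw [show K * P * 1 * M * K⁻¹ = K * (P * M) * K⁻¹ from by noncomm_ring]
    _ = (K⁻¹ * K * (P * M)).trace := Matrix.trace_mul_cycle _ _ _
    _ = (P * M).trace := by rw [Matrix.nonsing_inv_mul _ hKdet, one_mul]
  obtain ⟨-, heqZ⟩ := key_ineq hZ0 hRpsd
  have hRZ : R = K * M⁻¹ * K := by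
    apply heqZ
    have h1 : R.trace.re = ((P * M).trace).re := by rw [← hfidQ, heqτ]
    have h2 : ((K * M⁻¹ * K).trace).re = ((P * M).trace).re := by rw [htrZ0]
    have h3 : ((R * (K * M⁻¹ * K)⁻¹ * R).trace).re = ((P * M).trace).re := by rw [htrRZR]
    rw [h1, h2, h3]
    linarith
  have hcan : ∀ Y : Matrix d d ℂ, K⁻¹ * (K * Y * K) * K⁻¹ = Y := by
    intro Y
    calc K⁻¹ * (K * Y * K) * K⁻¹ = (K⁻¹ * K) * Y * (K * K⁻¹) := by noncomm_ring
    _ = Y := by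
        rw [Matrix.nonsing_inv_mul _ hKdet, Matrix.mul_nonsing_inv _ hKdet, one_mul, mul_one]
  have h1 : K * P * K = K * (M⁻¹ * Q * M⁻¹) * K := by
    calc K * P * K = R * R := by rw [hR2, hAdef]
    _ = (K * M⁻¹ * K) * (K * M⁻¹ * K) := by rw [hRZ]
    _ = K * M⁻¹ * (K * K) * M⁻¹ * K := by noncomm_ring
    _ = K * (M⁻¹ * Q * M⁻¹) * K := by rw [hK2]; noncomm_ring
  have hPeq : P = M⁻¹ * Q * M⁻¹ := by
    rw [← hcan P, h1, hcan]
  calc Q = (M * M⁻¹) * Q * (M⁻¹ * M) := by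
        rw [Matrix.mul_nonsing_inv _ hMdet, Matrix.nonsing_inv_mul _ hMdet, one_mul, mul_one]
  _ = M * (M⁻¹ * Q * M⁻¹) * M := by noncomm_ring
  _ = M * P * M := by rw [← hPeq]
end
end

section
/- Let Λ be a quantum channel, C positive definite, and P a positive semidefinite matrix, and let Q₀ and Q₁ both be maximizers of Q ↦ F(P,Q) over the feasible set Λ^{-1}[C] := {Q PSD : Λ(Q) = C}. Then the compressions of Q₀ and Q₁ to the support of P agree: x† Q₀ y = x† Q₁ y for all vectors x, y in the range of P. In particular, if P is positive definite, the maximizer of Q ↦ F(P,Q) over Λ^{-1}[C] is unique. -/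
open Matrix Kronecker
open scoped ComplexOrder

noncomputable section

namespace Matrix.PosSemidef
variable {n : Type*} [Fintype n] [DecidableEq n]

/-- The positive semidefinite square root (replacement for the removed Mathlib definition). -/
noncomputable def sqrt {A : Matrix n n ℂ} (hA : A.PosSemidef) : Matrix n n ℂ :=
  (hA.1.eigenvectorUnitary : Matrix n n ℂ) *
      diagonal (((↑) : ℝ → ℂ) ∘ Real.sqrt ∘ hA.1.eigenvalues) *
      (star hA.1.eigenvectorUnitary : Matrix n n ℂ)

open scoped MatrixOrder in
lemma sqrt_eq_cfc {A : Matrix n n ℂ} (hA : A.PosSemidef) : hA.sqrt = CFC.sqrt A := by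
  rw [CFC.sqrt_eq_cfc, cfc_nnreal_eq_real _ A, hA.1.cfc_eq, IsHermitian.cfc,
    Unitary.conjStarAlgAut_apply, sqrt]
  congr 3; funext x; simp only [Function.comp_apply, Real.coe_sqrt, Real.coe_toNNReal']
  rcases le_total (hA.1.eigenvalues x) 0 with h | h
  · rw [max_eq_right h, Real.sqrt_zero, Real.sqrt_eq_zero'.mpr h]; simp
  · rw [max_eq_left h]; rfl

open scoped MatrixOrder in
lemma sqrt_mul_self {A : Matrix n n ℂ} (hA : A.PosSemidef) : hA.sqrt * hA.sqrt = A := by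
  rw [sqrt_eq_cfc]; exact CFC.sqrt_mul_sqrt_self A hA.nonneg

open scoped MatrixOrder in
lemma posSemidef_sqrt {A : Matrix n n ℂ} (hA : A.PosSemidef) : hA.sqrt.PosSemidef := by
  rw [sqrt_eq_cfc]; exact Matrix.nonneg_iff_posSemidef.mp (CFC.sqrt_nonneg A)

open scoped MatrixOrder in
lemma eq_sqrt_of_sq_eq {A B : Matrix n n ℂ} (hB : B.PosSemidef) (hA : A.PosSemidef)
    (h : B ^ 2 = A) : B = hA.sqrt := by
  rw [sqrt_eq_cfc, eq_comm, CFC.sqrt_eq_iff A B hA.nonneg hB.nonneg, ← sq, h]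

end Matrix.PosSemidef

section Helpers
open Polynomial
variable {n : Type*} [Fintype n] [DecidableEq n]

lemma charpoly_conj_eq (U M V : Matrix n n ℂ) (hUV : U * V = 1) (hVU : V * U = 1) :
    (U * M * V).charpoly = M.charpoly := by
  set mm := (C : ℂ →+* ℂ[X]).mapMatrix (m := n)
  have hcomm : ∀ W : Matrix n n ℂ, mm W * (Matrix.scalar n (X : ℂ[X]))
      = (Matrix.scalar n (X : ℂ[X])) * mm W := fun W =>
    (Matrix.scalar_commute (X : ℂ[X]) (fun r => Commute.all _ _) (mm W)).symm
  have hdet : mm U * (M.charmatrix) * mm V = (U * M * V).charmatrix := by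
    rw [charmatrix, charmatrix, mul_sub, sub_mul, hcomm, mul_assoc, ← map_mul mm, hUV,
      _root_.map_one, mul_one]
    congr 1
    rw [← map_mul mm, ← map_mul mm]
  have h2 := congrArg Matrix.det hdet
  rw [Matrix.det_mul, Matrix.det_mul] at h2
  have h3 : (mm U).det * (mm V).det = 1 := by
    rw [← Matrix.det_mul, ← map_mul mm, hUV, _root_.map_one, Matrix.det_one]
  rw [Matrix.charpoly, ← h2, mul_comm (mm U).det, mul_assoc, h3, mul_one, Matrix.charpoly]

lemma my_charpoly_zero : (0 : Matrix n n ℂ).charpoly = X ^ (Fintype.card n) := by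
  rw [Matrix.charpoly, charmatrix]
  simp [Matrix.scalar, Matrix.det_diagonal, Finset.prod_const, Matrix.map_zero _ (Polynomial.C_0)]

lemma my_charpoly_mul_comm (A B : Matrix n n ℂ) : (A * B).charpoly = (B * A).charpoly := by
  have key : (fromBlocks 1 (-A) 0 1 : Matrix (n ⊕ n) (n ⊕ n) ℂ) *
      (fromBlocks (A * B) 0 B 0) * (fromBlocks 1 A 0 1) = fromBlocks 0 0 B (B * A) := by
    rw [Matrix.fromBlocks_multiply, Matrix.fromBlocks_multiply]
    simp [Matrix.mul_assoc]
  have hUV : (fromBlocks 1 (-A) 0 1 : Matrix (n ⊕ n) (n ⊕ n) ℂ) * (fromBlocks 1 A 0 1) = 1 := by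
    rw [Matrix.fromBlocks_multiply]; simp [← Matrix.fromBlocks_one]
  have hVU : (fromBlocks 1 A 0 1 : Matrix (n ⊕ n) (n ⊕ n) ℂ) * (fromBlocks 1 (-A) 0 1) = 1 := by
    rw [Matrix.fromBlocks_multiply]; simp [← Matrix.fromBlocks_one]
  have h1 := charpoly_conj_eq _ (fromBlocks (A * B) 0 B 0) _ hUV hVU
  rw [key] at h1
  have h2 : (fromBlocks (A * B) 0 B 0 : Matrix (n ⊕ n) (n ⊕ n) ℂ).charpoly
      = (A * B).charpoly * X ^ (Fintype.card n) := by
    rw [Matrix.charpoly_fromBlocks_zero₁₂, my_charpoly_zero]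
  have h3 : (fromBlocks 0 0 B (B * A) : Matrix (n ⊕ n) (n ⊕ n) ℂ).charpoly
      = X ^ (Fintype.card n) * (B * A).charpoly := by
    rw [Matrix.charpoly_fromBlocks_zero₁₂, my_charpoly_zero]
  rw [h2, h3] at h1
  have hX : (X : ℂ[X]) ^ (Fintype.card n) ≠ 0 := pow_ne_zero _ X_ne_zero
  rw [mul_comm ((A * B).charpoly)] at h1
  exact (mul_left_cancel₀ hX h1).symm

lemma my_charpoly_diagonal (d : n → ℂ) :
    (Matrix.diagonal d).charpoly = ∏ i, (X - C (d i)) := by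
  have : (Matrix.diagonal d).charmatrix = Matrix.diagonal (fun i => X - C (d i)) := by
    ext i j
    by_cases h : i = j
    · subst h; simp [Matrix.charmatrix_apply_eq]
    · simp [Matrix.charmatrix_apply_ne _ _ _ h, Matrix.diagonal_apply_ne _ h]
  rw [Matrix.charpoly, this, Matrix.det_diagonal]

lemma unitary_mul_star (U : Matrix.unitaryGroup n ℂ) :
    (U : Matrix n n ℂ) * star (U : Matrix n n ℂ) = 1 :=
  Matrix.mem_unitaryGroup_iff.mp U.2

lemma star_mul_unitary (U : Matrix.unitaryGroup n ℂ) :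
    star (U : Matrix n n ℂ) * (U : Matrix n n ℂ) = 1 :=
  Matrix.mem_unitaryGroup_iff'.mp U.2

lemma my_charpoly_hermitian {M : Matrix n n ℂ} (hM : M.IsHermitian) :
    M.charpoly = ∏ i, (X - C ((hM.eigenvalues i : ℝ) : ℂ)) := by
  have h := hM.spectral_theorem
  rw [Unitary.conjStarAlgAut_apply] at h
  rw [← my_charpoly_diagonal]
  calc M.charpoly
      = ((hM.eigenvectorUnitary : Matrix n n ℂ) * Matrix.diagonal (RCLike.ofReal ∘ hM.eigenvalues)
        * star (hM.eigenvectorUnitary : Matrix n n ℂ)).charpoly := by rw [← h]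
    _ = (Matrix.diagonal (RCLike.ofReal ∘ hM.eigenvalues)).charpoly :=
        charpoly_conj_eq _ _ _ (unitary_mul_star _) (star_mul_unitary _)
    _ = _ := rfl

lemma my_trace_sqrt {M : Matrix n n ℂ} (hM : M.PosSemidef) :
    hM.sqrt.trace = ∑ i, ((Real.sqrt (hM.1.eigenvalues i) : ℝ) : ℂ) := by
  rw [Matrix.PosSemidef.sqrt, Matrix.trace_mul_cycle, star_mul_unitary, Matrix.one_mul,
    Matrix.trace_diagonal]
  rfl

lemma my_eig_multiset_eq {M N : Matrix n n ℂ} (hM : M.IsHermitian) (hN : N.IsHermitian)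
    (h : M.charpoly = N.charpoly) :
    (Finset.univ.val.map fun i => ((hM.eigenvalues i : ℝ) : ℂ))
      = (Finset.univ.val.map fun i => ((hN.eigenvalues i : ℝ) : ℂ)) := by
  have hM' := my_charpoly_hermitian hM
  have hN' := my_charpoly_hermitian hN
  rw [hM', hN'] at h
  have e1 : ∀ (f : n → ℂ), (∏ i, (X - C (f i)))
      = ((Finset.univ.val.map fun i => f i).map fun a => X - C a).prod := by
    intro f
    rw [Multiset.map_map, Finset.prod_eq_multiset_prod]
    rfl
  rw [e1, e1] at h
  have := congrArg Polynomial.roots h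
  rwa [Polynomial.roots_multiset_prod_X_sub_C, Polynomial.roots_multiset_prod_X_sub_C] at this

lemma my_trace_sqrt_eq_of_charpoly {M N : Matrix n n ℂ} (hM : M.PosSemidef) (hN : N.PosSemidef)
    (h : M.charpoly = N.charpoly) : hM.sqrt.trace = hN.sqrt.trace := by
  rw [my_trace_sqrt hM, my_trace_sqrt hN]
  have key := my_eig_multiset_eq hM.1 hN.1 h
  have e2 : ∀ (g : n → ℝ),
      (∑ i, ((Real.sqrt (g i) : ℝ) : ℂ))
        = ((Finset.univ.val.map fun i => ((g i : ℝ) : ℂ)).map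
            fun z => ((Real.sqrt z.re : ℝ) : ℂ)).sum := by
    intro g
    rw [Multiset.map_map, Finset.sum_eq_multiset_sum]
    simp
  rw [e2, e2, key]

lemma msqrt_eq {A : Matrix n n ℂ} (hA : A.PosSemidef) : msqrt A = hA.sqrt := dif_pos hA

set_option maxHeartbeats 1000000 in
lemma fidelity_eq {P Q : Matrix n n ℂ} (hP : P.PosSemidef) (hQ : Q.PosSemidef)
    (hS : (hP.sqrt * Q * hP.sqrt).PosSemidef) :
    fidelity P Q = hS.sqrt.trace.re := by
  have hAt : (hP.sqrt * hQ.sqrt)ᴴ = hQ.sqrt * hP.sqrt := by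
    rw [Matrix.conjTranspose_mul, hP.posSemidef_sqrt.1.eq, hQ.posSemidef_sqrt.1.eq]
  have h1 : (hP.sqrt * hQ.sqrt)ᴴ * (hP.sqrt * hQ.sqrt) = hQ.sqrt * P * hQ.sqrt := by
    rw [hAt]
    conv_rhs => rw [show P = hP.sqrt * hP.sqrt from hP.sqrt_mul_self.symm]
    simp only [Matrix.mul_assoc]
  have h2 : (hP.sqrt * hQ.sqrt) * (hP.sqrt * hQ.sqrt)ᴴ = hP.sqrt * Q * hP.sqrt := by
    rw [hAt]
    conv_rhs => rw [show Q = hQ.sqrt * hQ.sqrt from hQ.sqrt_mul_self.symm]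
    simp only [Matrix.mul_assoc]
  have hPSD1 : (hQ.sqrt * P * hQ.sqrt).PosSemidef :=
    h1 ▸ Matrix.posSemidef_conjTranspose_mul_self (hP.sqrt * hQ.sqrt)
  have htr : hPSD1.sqrt.trace = hS.sqrt.trace := by
    apply my_trace_sqrt_eq_of_charpoly
    rw [← h1, ← h2]
    exact my_charpoly_mul_comm (hP.sqrt * hQ.sqrt)ᴴ (hP.sqrt * hQ.sqrt)
  unfold fidelity
  rw [msqrt_eq hQ, msqrt_eq hPSD1, htr]

lemma psd_diag_entry {T : Matrix n n ℂ} (hT : T.PosSemidef) (i : n) :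
    T i i = ((T i i).re : ℂ) ∧ 0 ≤ (T i i).re := by
  have h := hT.dotProduct_mulVec_nonneg (Pi.single i 1)
  have hval : dotProduct (star (Pi.single i 1)) (T *ᵥ Pi.single i 1) = T i i := by
    simp only [Matrix.mulVec_single, MulOpposite.op_one, one_smul, Matrix.col_apply, dotProduct,
      mul_one, Pi.star_apply]
    have hx : ∀ x : n, star (Pi.single (M := fun _ => ℂ) i 1 x) * T x i
        = if x = i then T x i else 0 := by
      intro x; by_cases hxx : x = i <;> simp [Pi.single_apply, hxx]
    rw [Finset.sum_congr rfl (fun x _ => hx x), Finset.sum_ite_eq' Finset.univ i (fun x => T x i)]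
    simp
  rw [hval] at h
  rw [Complex.le_def] at h
  refine ⟨?_, h.1⟩
  rw [Complex.ext_iff]
  simp [← h.2]

lemma psd_diag_re_eq_sum_normSq {T : Matrix n n ℂ} (hT : T.PosSemidef) (i : n) :
    (T i i).re = ∑ j, Complex.normSq (hT.sqrt i j) := by
  have hRR : hT.sqrt * hT.sqrt = T := hT.sqrt_mul_self
  have hherm : hT.sqrt.IsHermitian := hT.posSemidef_sqrt.1
  have : T i i = ∑ j, ((Complex.normSq (hT.sqrt i j) : ℝ) : ℂ) := by
    conv_lhs => rw [← hRR]
    rw [Matrix.mul_apply]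
    congr 1; ext j
    rw [show hT.sqrt j i = star (hT.sqrt i j) from (hherm.apply j i).symm]
    exact Complex.mul_conj _
  rw [this]
  simp

lemma sqrt_diag_le {T : Matrix n n ℂ} (hT : T.PosSemidef) (i : n) :
    (hT.sqrt i i).re ≤ Real.sqrt ((T i i).re) := by
  have h1 := psd_diag_re_eq_sum_normSq hT i
  have h2 := psd_diag_entry hT.posSemidef_sqrt i
  rw [Real.le_sqrt h2.2]
  rw [h1]
  have : (hT.sqrt i i).re ^ 2 = Complex.normSq (hT.sqrt i i) := by
    rw [Complex.normSq_apply]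
    have him : (hT.sqrt i i).im = 0 := by
      rw [h2.1]; simp
    rw [him]; ring
  rw [this]
  exact Finset.single_le_sum (fun j _ => Complex.normSq_nonneg _) (Finset.mem_univ i)
  exact (psd_diag_entry hT i).2

lemma trace_sqrt_le_sum_sqrt_diag {T : Matrix n n ℂ} (hT : T.PosSemidef) :
    hT.sqrt.trace.re ≤ ∑ i, Real.sqrt ((T i i).re) := by
  rw [Matrix.trace, Complex.re_sum]
  exact Finset.sum_le_sum fun i _ => sqrt_diag_le hT i

lemma offdiag_zero_of_trace_sqrt_eq {T : Matrix n n ℂ} (hT : T.PosSemidef)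
    (h : ∑ i, Real.sqrt ((T i i).re) = hT.sqrt.trace.re) :
    ∀ i j, i ≠ j → T i j = 0 := by
  have htr : hT.sqrt.trace.re = ∑ i, (hT.sqrt i i).re := by
    rw [Matrix.trace, Complex.re_sum]; rfl
  rw [htr] at h
  have hle : ∀ i ∈ Finset.univ, (hT.sqrt i i).re ≤ Real.sqrt ((T i i).re) :=
    fun i _ => sqrt_diag_le hT i
  have heach : ∀ i ∈ Finset.univ, (hT.sqrt i i).re = Real.sqrt ((T i i).re) :=
    (Finset.sum_eq_sum_iff_of_le hle).mp h.symm
  have hR0 : ∀ i j, i ≠ j → hT.sqrt i j = 0 := by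
    intro i j hij
    have h1 : (hT.sqrt i i).re ^ 2 = (T i i).re := by
      rw [heach i (Finset.mem_univ i), Real.sq_sqrt (psd_diag_entry hT i).2]
    have h2 := psd_diag_re_eq_sum_normSq hT i
    have h3 : Complex.normSq (hT.sqrt i i) = (hT.sqrt i i).re ^ 2 := by
      rw [Complex.normSq_apply]
      have := (psd_diag_entry hT.posSemidef_sqrt i).1
      rw [show (hT.sqrt i i).im = 0 by rw [this]; simp]
      ring
    have h4 : ∑ j ∈ Finset.univ.erase i, Complex.normSq (hT.sqrt i j) = 0 := by
      have := Finset.add_sum_erase Finset.univ (fun j => Complex.normSq (hT.sqrt i j))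
        (Finset.mem_univ i)
      rw [← this] at h2
      beta_reduce at h2
      rw [h3, h1] at h2
      linarith
    have h5 := (Finset.sum_eq_zero_iff_of_nonneg
      (fun j _ => Complex.normSq_nonneg (hT.sqrt i j))).mp h4 j
      (Finset.mem_erase.mpr ⟨hij.symm, Finset.mem_univ j⟩)
    exact Complex.normSq_eq_zero.mp h5
  intro i j hij
  rw [← hT.sqrt_mul_self, Matrix.mul_apply]
  apply Finset.sum_eq_zero
  intro k _
  by_cases hk : k = i
  · subst hk; rw [hR0 k j hij]; ring
  · rw [hR0 i k (fun hc => hk hc.symm)]; ring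

lemma sqrt_midpoint_ge {a b : ℝ} (ha : 0 ≤ a) (hb : 0 ≤ b) :
    (Real.sqrt a + Real.sqrt b) / 2 ≤ Real.sqrt ((a + b) / 2) := by
  rw [Real.le_sqrt (by positivity)]
  nlinarith [Real.sq_sqrt ha, Real.sq_sqrt hb, sq_nonneg (Real.sqrt a - Real.sqrt b),
    Real.sqrt_nonneg a, Real.sqrt_nonneg b]
  positivity

lemma sqrt_midpoint_eq {a b : ℝ} (ha : 0 ≤ a) (hb : 0 ≤ b)
    (h : (Real.sqrt a + Real.sqrt b) / 2 = Real.sqrt ((a + b) / 2)) : a = b := by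
  have h2 : ((Real.sqrt a + Real.sqrt b) / 2) ^ 2 = (a + b) / 2 := by
    rw [h, Real.sq_sqrt (by positivity)]
  have h3 : Real.sqrt a = Real.sqrt b := by
    nlinarith [Real.sq_sqrt ha, Real.sq_sqrt hb, sq_nonneg (Real.sqrt a - Real.sqrt b)]
  calc a = Real.sqrt a ^ 2 := (Real.sq_sqrt ha).symm
    _ = Real.sqrt b ^ 2 := by rw [h3]
    _ = b := Real.sq_sqrt hb

lemma trace_sqrt_conj {S : Matrix n n ℂ} (hS : S.PosSemidef) (U : Matrix.unitaryGroup n ℂ)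
    (hT : (star (U : Matrix n n ℂ) * S * (U : Matrix n n ℂ)).PosSemidef) :
    hT.sqrt.trace = hS.sqrt.trace := by
  have hsq : (star (U : Matrix n n ℂ) * hS.sqrt * (U : Matrix n n ℂ)) ^ 2
      = star (U : Matrix n n ℂ) * S * (U : Matrix n n ℂ) := by
    rw [pow_two]
    calc (star (U : Matrix n n ℂ) * hS.sqrt * U) * (star (U : Matrix n n ℂ) * hS.sqrt * U)
        = star (U : Matrix n n ℂ) * hS.sqrt * ((U : Matrix n n ℂ) * star (U : Matrix n n ℂ))
          * hS.sqrt * U := by simp only [Matrix.mul_assoc]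
      _ = star (U : Matrix n n ℂ) * (hS.sqrt * hS.sqrt) * U := by
          rw [unitary_mul_star]; simp only [Matrix.mul_one, Matrix.mul_assoc]
      _ = _ := by rw [hS.sqrt_mul_self]
  have hpsd : (star (U : Matrix n n ℂ) * hS.sqrt * (U : Matrix n n ℂ)).PosSemidef := by
    have := hS.posSemidef_sqrt.conjTranspose_mul_mul_same (U : Matrix n n ℂ)
    rwa [← Matrix.star_eq_conjTranspose] at this
  have := hpsd.eq_sqrt_of_sq_eq hT hsq
  rw [← this, Matrix.trace_mul_cycle, unitary_mul_star, Matrix.one_mul]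

lemma traceSqrt_concave_strict {S₀ S₁ : Matrix n n ℂ} (h₀ : S₀.PosSemidef) (h₁ : S₁.PosSemidef)
    (hbar : (((2:ℂ)⁻¹) • (S₀ + S₁)).PosSemidef) :
    (h₀.sqrt.trace.re + h₁.sqrt.trace.re) / 2 ≤ hbar.sqrt.trace.re ∧
    (hbar.sqrt.trace.re = (h₀.sqrt.trace.re + h₁.sqrt.trace.re) / 2 → S₀ = S₁) := by
  set U := hbar.1.eigenvectorUnitary with hU
  set d := hbar.1.eigenvalues with hd
  have hT₀ : (star (U : Matrix n n ℂ) * S₀ * (U : Matrix n n ℂ)).PosSemidef := by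
    have := h₀.conjTranspose_mul_mul_same (U : Matrix n n ℂ)
    rwa [← Matrix.star_eq_conjTranspose] at this
  have hT₁ : (star (U : Matrix n n ℂ) * S₁ * (U : Matrix n n ℂ)).PosSemidef := by
    have := h₁.conjTranspose_mul_mul_same (U : Matrix n n ℂ)
    rwa [← Matrix.star_eq_conjTranspose] at this
  set T₀ := star (U : Matrix n n ℂ) * S₀ * (U : Matrix n n ℂ) with hT₀def
  set T₁ := star (U : Matrix n n ℂ) * S₁ * (U : Matrix n n ℂ) with hT₁def
  have hdiag : (2:ℂ)⁻¹ • (T₀ + T₁) = Matrix.diagonal (RCLike.ofReal ∘ d) := by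
    have hsp := hbar.1.spectral_theorem
    rw [Unitary.conjStarAlgAut_apply] at hsp
    have : star (U : Matrix n n ℂ) * ((2:ℂ)⁻¹ • (S₀ + S₁)) * (U : Matrix n n ℂ)
        = Matrix.diagonal (RCLike.ofReal ∘ d) := by
      conv_lhs => rw [hsp]
      calc star (U : Matrix n n ℂ) * ((U : Matrix n n ℂ)
            * Matrix.diagonal (RCLike.ofReal ∘ d) * star (U : Matrix n n ℂ)) * (U : Matrix n n ℂ)
          = (star (U : Matrix n n ℂ) * (U : Matrix n n ℂ)) * Matrix.diagonal (RCLike.ofReal ∘ d)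
            * (star (U : Matrix n n ℂ) * (U : Matrix n n ℂ)) := by simp only [Matrix.mul_assoc]
        _ = _ := by rw [star_mul_unitary]; simp
    rw [← this, hT₀def, hT₁def]
    rw [Matrix.mul_smul, Matrix.smul_mul]
    congr 1
    rw [Matrix.mul_add, Matrix.add_mul]
  have ha : ∀ i, T₀ i i = ((T₀ i i).re : ℂ) ∧ 0 ≤ (T₀ i i).re := fun i => psd_diag_entry hT₀ i
  have hb : ∀ i, T₁ i i = ((T₁ i i).re : ℂ) ∧ 0 ≤ (T₁ i i).re := fun i => psd_diag_entry hT₁ i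
  have heig : ∀ i, d i = ((T₀ i i).re + (T₁ i i).re) / 2 := by
    intro i
    have h0 := congrFun (congrFun hdiag i) i
    rw [Matrix.smul_apply, Matrix.add_apply, Matrix.diagonal_apply_eq] at h0
    simp only [Function.comp_apply] at h0
    rw [(ha i).1, (hb i).1, smul_eq_mul] at h0
    have h2 := congrArg Complex.re h0
    norm_num [Complex.mul_re, Complex.add_re, Complex.add_im] at h2
    linarith [h2]
  have hkey : hbar.sqrt.trace.re = ∑ i, Real.sqrt (d i) := by
    rw [my_trace_sqrt hbar, Complex.re_sum]
    simp [hd]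
  have htr0 : hT₀.sqrt.trace.re = h₀.sqrt.trace.re := by rw [trace_sqrt_conj h₀ U hT₀]
  have htr1 : hT₁.sqrt.trace.re = h₁.sqrt.trace.re := by rw [trace_sqrt_conj h₁ U hT₁]
  have hptwise : ∀ i ∈ Finset.univ,
      (Real.sqrt ((T₀ i i).re) + Real.sqrt ((T₁ i i).re)) / 2 ≤ Real.sqrt (d i) := by
    intro i _
    rw [heig i]
    exact sqrt_midpoint_ge (ha i).2 (hb i).2
  have hsum1 : ∑ i, (Real.sqrt ((T₀ i i).re) + Real.sqrt ((T₁ i i).re)) / 2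
      ≤ ∑ i, Real.sqrt (d i) := Finset.sum_le_sum hptwise
  have hsum0a := trace_sqrt_le_sum_sqrt_diag hT₀
  have hsum0b := trace_sqrt_le_sum_sqrt_diag hT₁
  have hsplit : ∑ i, (Real.sqrt ((T₀ i i).re) + Real.sqrt ((T₁ i i).re)) / 2
      = (∑ i, Real.sqrt ((T₀ i i).re) + ∑ i, Real.sqrt ((T₁ i i).re)) / 2 := by
    rw [← Finset.sum_add_distrib, ← Finset.sum_div]
  constructor
  · rw [hkey, ← htr0, ← htr1]
    calc (hT₀.sqrt.trace.re + hT₁.sqrt.trace.re) / 2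
        ≤ (∑ i, Real.sqrt ((T₀ i i).re) + ∑ i, Real.sqrt ((T₁ i i).re)) / 2 := by linarith
      _ = _ := hsplit.symm
      _ ≤ _ := hsum1
  · intro heq
    rw [hkey, ← htr0, ← htr1] at heq
    have e1 : ∑ i, (Real.sqrt ((T₀ i i).re) + Real.sqrt ((T₁ i i).re)) / 2
        = ∑ i, Real.sqrt (d i) := by rw [hsplit]; linarith
    have e2 : ∑ i, Real.sqrt ((T₀ i i).re) = hT₀.sqrt.trace.re := by rw [hsplit] at e1; linarith
    have e3 : ∑ i, Real.sqrt ((T₁ i i).re) = hT₁.sqrt.trace.re := by rw [hsplit] at e1; linarith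
    have heachi := (Finset.sum_eq_sum_iff_of_le hptwise).mp e1
    have hab : ∀ i, (T₀ i i).re = (T₁ i i).re := by
      intro i
      have hthis := heachi i (Finset.mem_univ i)
      rw [heig i] at hthis
      exact sqrt_midpoint_eq (ha i).2 (hb i).2 hthis
    have hoff0 := offdiag_zero_of_trace_sqrt_eq hT₀ e2
    have hoff1 := offdiag_zero_of_trace_sqrt_eq hT₁ e3
    have hTeq : T₀ = T₁ := by
      ext i j
      by_cases hij : i = j
      · subst hij
        rw [(ha i).1, (hb i).1, hab i]
      · rw [hoff0 i j hij, hoff1 i j hij]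
    have hS0 : (U : Matrix n n ℂ) * T₀ * star (U : Matrix n n ℂ) = S₀ := by
      rw [hT₀def]
      calc (U : Matrix n n ℂ) * (star (U : Matrix n n ℂ) * S₀ * (U : Matrix n n ℂ))
            * star (U : Matrix n n ℂ)
          = ((U : Matrix n n ℂ) * star (U : Matrix n n ℂ)) * S₀
            * ((U : Matrix n n ℂ) * star (U : Matrix n n ℂ)) := by simp only [Matrix.mul_assoc]
        _ = S₀ := by rw [unitary_mul_star]; simp
    have hS1 : (U : Matrix n n ℂ) * T₁ * star (U : Matrix n n ℂ) = S₁ := by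
      rw [hT₁def]
      calc (U : Matrix n n ℂ) * (star (U : Matrix n n ℂ) * S₁ * (U : Matrix n n ℂ))
            * star (U : Matrix n n ℂ)
          = ((U : Matrix n n ℂ) * star (U : Matrix n n ℂ)) * S₁
            * ((U : Matrix n n ℂ) * star (U : Matrix n n ℂ)) := by simp only [Matrix.mul_assoc]
        _ = S₁ := by rw [unitary_mul_star]; simp
    rw [← hS0, ← hS1, hTeq]

lemma trace_sqrt_congr {M N : Matrix n n ℂ} (hM : M.PosSemidef) (hN : N.PosSemidef)
    (h : M = N) : hM.sqrt.trace = hN.sqrt.trace := by subst h; rfl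

lemma sandwich_psd {P Q : Matrix n n ℂ} (hP : P.PosSemidef) (hQ : Q.PosSemidef) :
    (hP.sqrt * Q * hP.sqrt).PosSemidef := by
  have := hQ.mul_mul_conjTranspose_same hP.sqrt
  rwa [hP.posSemidef_sqrt.1.eq] at this

lemma psd_half {A B : Matrix n n ℂ} (hA : A.PosSemidef) (hB : B.PosSemidef) :
    ((2:ℂ)⁻¹ • (A + B)).PosSemidef := by
  have hAB := hA.add hB
  refine Matrix.PosSemidef.of_dotProduct_mulVec_nonneg ?_ ?_
  · show ((2:ℂ)⁻¹ • (A + B))ᴴ = _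
    rw [Matrix.conjTranspose_smul, hAB.1]
    congr 1
    simp
  · intro x
    have h := hAB.dotProduct_mulVec_nonneg x
    rw [Matrix.smul_mulVec, dotProduct_smul, smul_eq_mul]
    rw [Complex.le_def] at h ⊢
    constructor
    · have := h.1
      simp only [Complex.mul_re, Complex.zero_re] at *
      norm_num
      nlinarith [h.1, h.2]
    · have := h.2
      simp only [Complex.mul_im, Complex.zero_im] at *
      norm_num
      simp [← this]

end Helpers

/-- Let `Λ` be a quantum channel, `C` positive definite, `P` PSD, and
let `Q₀, Q₁` both maximize `Q ↦ F(P,Q)` over `{Q PSD : Λ Q = C}`. Then the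
compressions of `Q₀` and `Q₁` to the support (range) of `P` agree, and if `P` is
positive definite the maximizer is unique. -/
theorem projection_restricted_uniqueness
    {H K : Type*} [Fintype H] [DecidableEq H] [Fintype K] [DecidableEq K]
    {m : ℕ} (Kr : Fin m → Matrix K H ℂ)
    (hTP : ∑ a, (Kr a)ᴴ * Kr a = (1 : Matrix H H ℂ))
    (Λ : Matrix H H ℂ → Matrix K K ℂ)
    (hΛ : ∀ X, Λ X = ∑ a, Kr a * X * (Kr a)ᴴ)
    (P : Matrix H H ℂ) (hP : P.PosSemidef)
    (C : Matrix K K ℂ) (hC : C.PosDef)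
    (Q₀ : Matrix H H ℂ) (hQ₀ : Q₀.PosSemidef) (hQ₀f : Λ Q₀ = C)
    (hQ₀max : ∀ Q : Matrix H H ℂ, Q.PosSemidef → Λ Q = C →
      fidelity P Q ≤ fidelity P Q₀)
    (Q₁ : Matrix H H ℂ) (hQ₁ : Q₁.PosSemidef) (hQ₁f : Λ Q₁ = C)
    (hQ₁max : ∀ Q : Matrix H H ℂ, Q.PosSemidef → Λ Q = C →
      fidelity P Q ≤ fidelity P Q₁) :
    (∀ u v : H → ℂ,
      star (P *ᵥ u) ⬝ᵥ (Q₀ *ᵥ (P *ᵥ v)) = star (P *ᵥ u) ⬝ᵥ (Q₁ *ᵥ (P *ᵥ v))) ∧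
    (P.PosDef → Q₀ = Q₁) := by
  -- the averaged state
  set Qb : Matrix H H ℂ := (2:ℂ)⁻¹ • (Q₀ + Q₁) with hQbdef
  have hQb : Qb.PosSemidef := psd_half hQ₀ hQ₁
  -- feasibility of the average
  have hQbf : Λ Qb = C := by
    rw [hΛ]
    have hterm : ∀ a : Fin m, Kr a * Qb * (Kr a)ᴴ
        = (2:ℂ)⁻¹ • (Kr a * Q₀ * (Kr a)ᴴ + Kr a * Q₁ * (Kr a)ᴴ) := by
      intro a
      rw [hQbdef, Matrix.mul_smul, Matrix.smul_mul, Matrix.mul_add, Matrix.add_mul]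
    rw [Finset.sum_congr rfl fun a _ => hterm a, ← Finset.smul_sum, Finset.sum_add_distrib,
      ← hΛ Q₀, ← hΛ Q₁, hQ₀f, hQ₁f, smul_add, ← add_smul]
    norm_num
  -- equal optimal values
  have hf01 : fidelity P Q₀ = fidelity P Q₁ :=
    le_antisymm (hQ₁max Q₀ hQ₀ hQ₀f) (hQ₀max Q₁ hQ₁ hQ₁f)
  -- transformed PSD matrices
  have hS₀ : (hP.sqrt * Q₀ * hP.sqrt).PosSemidef := sandwich_psd hP hQ₀
  have hS₁ : (hP.sqrt * Q₁ * hP.sqrt).PosSemidef := sandwich_psd hP hQ₁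
  have hSb : (hP.sqrt * Qb * hP.sqrt).PosSemidef := sandwich_psd hP hQb
  have hexp : hP.sqrt * Qb * hP.sqrt
      = (2:ℂ)⁻¹ • ((hP.sqrt * Q₀ * hP.sqrt) + (hP.sqrt * Q₁ * hP.sqrt)) := by
    rw [hQbdef, Matrix.mul_smul, Matrix.smul_mul, Matrix.mul_add, Matrix.add_mul]
  have hbar : ((2:ℂ)⁻¹ • ((hP.sqrt * Q₀ * hP.sqrt) + (hP.sqrt * Q₁ * hP.sqrt))).PosSemidef := by
    rw [← hexp]; exact hSb
  -- fidelities in the S form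
  have hf0 : fidelity P Q₀ = hS₀.sqrt.trace.re := fidelity_eq hP hQ₀ hS₀
  have hf1 : fidelity P Q₁ = hS₁.sqrt.trace.re := fidelity_eq hP hQ₁ hS₁
  have hfb : fidelity P Qb = hbar.sqrt.trace.re := by
    rw [fidelity_eq hP hQb hSb, trace_sqrt_congr hSb hbar hexp]
  -- concavity and maximality force equality
  have hcon := traceSqrt_concave_strict hS₀ hS₁ hbar
  have hub : fidelity P Qb ≤ fidelity P Q₀ := hQ₀max Qb hQb hQbf
  have heq : hbar.sqrt.trace.re = (hS₀.sqrt.trace.re + hS₁.sqrt.trace.re) / 2 := by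
    have h1 := hcon.1
    rw [← hf0, ← hf1, ← hfb]
    rw [← hf0, ← hf1, ← hfb] at h1
    rw [← hf01]
    rw [← hf01] at h1
    linarith
  have hSeq : hP.sqrt * Q₀ * hP.sqrt = hP.sqrt * Q₁ * hP.sqrt := hcon.2 heq
  -- compress with P
  have hPP : hP.sqrt * hP.sqrt = P := hP.sqrt_mul_self
  have hPQP : P * Q₀ * P = P * Q₁ * P := by
    have e0 : P * Q₀ * P = hP.sqrt * (hP.sqrt * Q₀ * hP.sqrt) * hP.sqrt := by
      conv_lhs => rw [← hPP]
      simp only [Matrix.mul_assoc]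
    have e1 : P * Q₁ * P = hP.sqrt * (hP.sqrt * Q₁ * hP.sqrt) * hP.sqrt := by
      conv_lhs => rw [← hPP]
      simp only [Matrix.mul_assoc]
    rw [e0, e1, hSeq]
  constructor
  · intro u v
    have key : ∀ Q : Matrix H H ℂ,
        star (P *ᵥ u) ⬝ᵥ (Q *ᵥ (P *ᵥ v)) = star u ⬝ᵥ ((P * Q * P) *ᵥ v) := by
      intro Q
      rw [Matrix.mulVec_mulVec, Matrix.star_mulVec, Matrix.dotProduct_mulVec,
        Matrix.vecMul_vecMul, Matrix.dotProduct_mulVec, hP.1.eq]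
      simp only [Matrix.mul_assoc]
    rw [key Q₀, key Q₁, hPQP]
  · intro hPD
    have hdet : IsUnit hP.sqrt.det := by
      have h1 : hP.sqrt.det * hP.sqrt.det = P.det := by rw [← Matrix.det_mul, hPP]
      have h2 : P.det ≠ 0 := ne_of_gt hPD.det_pos
      have h3 : hP.sqrt.det ≠ 0 := fun hc => h2 (by rw [← h1, hc, mul_zero])
      exact isUnit_iff_ne_zero.mpr h3
    have hcan : ∀ Q : Matrix H H ℂ,
        hP.sqrt⁻¹ * (hP.sqrt * Q * hP.sqrt) * hP.sqrt⁻¹ = Q := by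
      intro Q
      calc hP.sqrt⁻¹ * (hP.sqrt * Q * hP.sqrt) * hP.sqrt⁻¹
          = (hP.sqrt⁻¹ * hP.sqrt) * (Q * (hP.sqrt * hP.sqrt⁻¹)) := by
            simp only [Matrix.mul_assoc]
        _ = Q := by
            rw [Matrix.nonsing_inv_mul _ hdet, Matrix.mul_nonsing_inv _ hdet,
              Matrix.one_mul, Matrix.mul_one]
    rw [← hcan Q₀, ← hcan Q₁, hSeq]
end
end
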